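/- A disjunction-free multiplicity schema S is satisfiable (there exists a finite tree t with t ⊨ S) if and only if no cycle is reachable from the root label in the universal dependency graph G_S^u of S. -/

import Mathlib

open scoped Classical

variable {α : Type}

/-- Unordered words: multisets of symbols, as occurrence-count functions. -/
abbrev UWord (α : Type) := α → ℕ

/-- Multiplicities `*`, `+`, `?`, `0`, `1`. -/
inductive Mult : Type where
  | zero | one | opt | plus | star
deriving DecidableEq

/-- Interpretation of multiplicities as sets of natural numbers. -/
def Mult.sem : Mult → Set ℕ
  | .zero => {0}
  | .one => {1}
  | .opt => {0, 1}
  | .plus => {n | 0 < n}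
  | .star => Set.univ

/-- A disjunction `a₁^{M₁} | … | a_k^{M_k}`. -/
abbrev Disj (α : Type) := List (α × Mult)

/-- A disjunctive multiplicity expression `D₁^{M₁} ⊎ … ⊎ D_n^{M_n}`. -/
abbrev DME (α : Type) := List (Disj α × Mult)

/-- Language of `a^M`. -/
def singleLang (a : α) (m : Mult) : Set (UWord α) :=
  {w | w a ∈ m.sem ∧ ∀ b, b ≠ a → w b = 0}

/-- Language of a disjunction. -/
def disjLang (D : Disj α) : Set (UWord α) :=
  {w | ∃ p ∈ D, w ∈ singleLang p.1 p.2}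

/-- Pointwise (multiset) sum of a list of unordered words. -/
def sumWords (ws : List (UWord α)) : UWord α := fun a => (ws.map (fun u => u a)).sum

/-- Language of `D^M`. -/
def powLang (L : Set (UWord α)) (m : Mult) : Set (UWord α) :=
  {w | ∃ ws : List (UWord α), ws.length ∈ m.sem ∧ (∀ u ∈ ws, u ∈ L) ∧ w = sumWords ws}

/-- Language of a disjunctive multiplicity expression. -/
def dmeLang (E : DME α) : Set (UWord α) :=
  {w | ∃ ws : List (UWord α),
      List.Forall₂ (fun p u => u ∈ powLang (disjLang p.1) p.2) E ws ∧ w = sumWords ws}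

/-- Symbols occurring in a disjunctive multiplicity expression. -/
def dmeSymbols (E : DME α) : List α := E.flatMap (fun p => p.1.map Prod.fst)

/-- Normalized disjunctive multiplicity expression (each symbol occurs at most once,
each disjunction nonempty, and the two normal-form conditions of the paper). -/
def Normalized (E : DME α) : Prop :=
  (dmeSymbols E).Nodup ∧
  ∀ p ∈ E, p.1 ≠ [] ∧
    (p.2 ≠ Mult.one → p.2 = Mult.plus ∧ ∀ q ∈ p.1, q.2 = Mult.one) ∧
    ((∃ q ∈ p.1, (0 : ℕ) ∈ q.2.sem) → ∀ q ∈ p.1, (0 : ℕ) ∈ q.2.sem)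

/-- Conflicting pairs of siblings `C_E`. -/
def CE (E : DME α) : Set (α × α) :=
  {p | ¬ ∃ w ∈ dmeLang E, w p.1 ≠ 0 ∧ w p.2 ≠ 0}

/-- Extended cardinality map `N_E`. -/
def NE (E : DME α) : Set (α × ℕ) :=
  {p | ∃ w ∈ dmeLang E, w p.1 = p.2}

/-- Sets of required symbols `P_E`. -/
def PE (E : DME α) : Set (Set α) :=
  {X | ∀ w ∈ dmeLang E, ∃ a ∈ X, w a ≠ 0}

/-- Consistency of an unordered word with a characterizing triple. -/
def ConsTriple (w : UWord α) (C : Set (α × α)) (N : Set (α × ℕ)) (P : Set (Set α)) : Prop :=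
  (∀ p ∈ C, ¬ (w p.1 ≠ 0 ∧ w p.2 ≠ 0)) ∧
  (∀ a, (a, w a) ∈ N) ∧
  (∀ X ∈ P, ∃ a ∈ X, w a ≠ 0)

/-- Language of a disjunction-free multiplicity expression given as a list of
symbol/multiplicity pairs. -/
def dfLang (l : List (α × Mult)) : Set (UWord α) :=
  {w | (∀ p ∈ l, w p.1 ∈ p.2.sem) ∧ ∀ b, b ∉ l.map Prod.fst → w b = 0}

/-- Finite unordered trees. -/
inductive UTree (α : Type) : Type where
  | node : α → List (UTree α) → UTree α

def UTree.lab : UTree α → α | .node a _ => a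

def UTree.children : UTree α → List (UTree α) | .node _ ts => ts

/-- Twig queries: labels in `Σ ∪ {⋆}` (wildcard = `none`); each child subquery is tagged
with `false` for a child edge and `true` for a descendant edge. -/
inductive Twig (α : Type) : Type where
  | node : Option α → List (Twig α × Bool) → Twig α

/-- Proper subtree (proper descendant) relation. -/
inductive StrictDesc : UTree α → UTree α → Prop where
  | child {s t : UTree α} : s ∈ t.children → StrictDesc s t
  | step {s u t : UTree α} : StrictDesc s u → u ∈ t.children → StrictDesc s t

/-- `Sat t q`: the twig query `q` can be embedded in the tree `t`
(root to root, child edges to child edges, descendant edges to proper descendants,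
labels preserved up to wildcard). -/
def Sat : UTree α → Twig α → Prop
  | t, .node l qs =>
      (∀ x ∈ l, x = t.lab) ∧
      ∀ p ∈ qs, (p.2 = false → ∃ t' ∈ t.children, Sat t' p.1) ∧
                (p.2 = true → ∃ t', StrictDesc t' t ∧ Sat t' p.1)
termination_by t q => sizeOf q
decreasing_by
  all_goals
    obtain ⟨q', b'⟩ := p
    have h1 : sizeOf ((q', b') : Twig α × Bool) < sizeOf qs := List.sizeOf_lt_of_mem (by assumption)
    simp at h1 ⊢
    omega

/-- `TEmb t' t` : the tree `t'` can be embedded in the tree `t` (root-, child-, and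
label-preserving). -/
def TEmb : UTree α → UTree α → Prop
  | .node a ts', t => t.lab = a ∧ ∀ s' ∈ ts', ∃ s ∈ t.children, TEmb s' s

/-- `QGEmb E a q` : the twig query `q` can be embedded in the rooted graph with edge
relation `E` at root `a`. -/
def QGEmb (E : α → α → Prop) : α → Twig α → Prop
  | a, .node l qs =>
      (∀ x ∈ l, x = a) ∧
      ∀ p ∈ qs, (p.2 = false → ∃ b, E a b ∧ QGEmb E b p.1) ∧
                (p.2 = true → ∃ b, Relation.TransGen E a b ∧ QGEmb E b p.1)
termination_by a q => sizeOf q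
decreasing_by
  all_goals
    obtain ⟨q', b'⟩ := p
    have h1 : sizeOf ((q', b') : Twig α × Bool) < sizeOf qs := List.sizeOf_lt_of_mem (by assumption)
    simp at h1 ⊢
    omega

/-- Labeled paths of a tree: sequences of labels along root-to-node paths. -/
inductive IsLabPath : UTree α → List α → Prop where
  | root {a : α} {ts : List (UTree α)} : IsLabPath (UTree.node a ts) [a]
  | cons {a : α} {ts : List (UTree α)} {s : UTree α} {p : List α} :
      s ∈ ts → IsLabPath s p → IsLabPath (UTree.node a ts) (a :: p)

/-- Paths of a rooted graph: nonempty vertex sequences starting at the root and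
following edges. -/
def IsGPath (E : α → α → Prop) (root : α) (p : List α) : Prop :=
  p ≠ [] ∧ p.head? = some root ∧ p.Chain' E

/-- The unfolding of a rooted graph, truncated at depth `n`.  For a graph with no cycle
reachable from the root, taking `n = Fintype.card α` yields the full unfolding. -/
noncomputable def unfoldG [Fintype α] (E : α → α → Prop) : ℕ → α → UTree α
  | 0, a => .node a []
  | n + 1, a => .node a (((Finset.univ.filter fun b => E a b).toList).map (unfoldG E n))

/-- Number of leaves of a tree. -/
def leafCount : UTree α → ℕ
  | .node _ ts => if ts.isEmpty then 1 else (ts.attach.map (fun s => leafCount s.1)).sum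
decreasing_by
  have h1 := List.sizeOf_lt_of_mem s.2
  simp
  omega

/-- Disjunction-free multiplicity schema: a root label together with, for each label `a`,
a disjunction-free multiplicity expression given as the multiplicity `R a b` of every
symbol `b` (`Mult.zero` meaning `b` does not occur). -/
structure MS (α : Type) where
  root : α
  R : α → α → Mult

/-- Every node's children-label multiset matches the rule for the node's label. -/
inductive LocalOK [DecidableEq α] (R : α → α → Mult) : UTree α → Prop where
  | node {a : α} {ts : List (UTree α)} :
      (∀ b, ((ts.map UTree.lab).count b) ∈ (R a b).sem) →
      (∀ s ∈ ts, LocalOK R s) →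
      LocalOK R (UTree.node a ts)

/-- A tree satisfies a disjunction-free multiplicity schema. -/
def SatS [DecidableEq α] (S : MS α) (t : UTree α) : Prop :=
  t.lab = S.root ∧ LocalOK S.R t

/-- Edges of the universal dependency graph: `b` occurs in `R a` with multiplicity `+` or `1`. -/
def uEdge (S : MS α) (a b : α) : Prop := S.R a b = Mult.plus ∨ S.R a b = Mult.one

/-- Edges of the dependency graph: `b` occurs in `R a` with multiplicity in `{*,+,?,1}`. -/
def dEdge (S : MS α) (a b : α) : Prop := S.R a b ≠ Mult.zero

/-- A simulation of the rooted graph `(α, root, E)` in the tree `t`. -/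
def IsSimulation (E : α → α → Prop) (root : α) (t : UTree α) (R : α → UTree α → Prop) : Prop :=
  R root t ∧ (∀ a s, R a s → s.lab = a) ∧
  (∀ a s, R a s → ∀ b, E a b → ∃ s' ∈ s.children, R b s')

/-- One fuse step: two sibling nodes with the same label are merged into a single node
whose children are the children of both (applied anywhere in the tree). -/
inductive Fuse : UTree α → UTree α → Prop where
  | here {a b : α} {l₁ l₂ l₃ cs₁ cs₂ : List (UTree α)} :
      Fuse (UTree.node a (l₁ ++ UTree.node b cs₁ :: l₂ ++ UTree.node b cs₂ :: l₃))
           (UTree.node a (l₁ ++ UTree.node b (cs₁ ++ cs₂) :: l₂ ++ l₃))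
  | there {a : α} {s s' : UTree α} {l₁ l₂ : List (UTree α)} :
      Fuse s s' → Fuse (UTree.node a (l₁ ++ s :: l₂)) (UTree.node a (l₁ ++ s' :: l₂))

/-- One add step: an arbitrary new subtree is attached as an additional child of some
node of the tree. -/
inductive AddOp : UTree α → UTree α → Prop where
  | here {a : α} {s : UTree α} {l : List (UTree α)} :
      AddOp (UTree.node a l) (UTree.node a (s :: l))
  | there {a : α} {s s' : UTree α} {l₁ l₂ : List (UTree α)} :
      AddOp s s' → AddOp (UTree.node a (l₁ ++ s :: l₂)) (UTree.node a (l₁ ++ s' :: l₂))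

section AuxProof

variable {α : Type}

lemma utree_sizeOf_pos (t : UTree α) : 0 < sizeOf t := by
  cases t; simp

lemma sizeOf_lt_of_mem_children {s : UTree α} {a : α} {ts : List (UTree α)}
    (h : s ∈ ts) : sizeOf s < sizeOf (UTree.node a ts) := by
  have := List.sizeOf_lt_of_mem h
  simp; omega

lemma child_of_uEdge {S : MS α} {a : α} {ts : List (UTree α)} [DecidableEq α]
    (h : LocalOK S.R (UTree.node a ts)) {b : α} (e : uEdge S a b) :
    ∃ s ∈ ts, s.lab = b ∧ LocalOK S.R s := by
  cases h with
  | node h1 h2 =>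
    have hc := h1 b
    have hpos : 0 < (ts.map UTree.lab).count b := by
      rcases e with e | e <;> rw [e] at hc
      · simpa [Mult.sem] using hc
      · simp [Mult.sem] at hc; omega
    have hb : b ∈ ts.map UTree.lab := List.count_pos_iff.mp hpos
    obtain ⟨s, hs, rfl⟩ := List.mem_map.mp hb
    exact ⟨s, hs, rfl, h2 s hs⟩

lemma descend {S : MS α} [DecidableEq α] {a b : α}
    (h : Relation.ReflTransGen (uEdge S) a b) :
    ∀ t : UTree α, t.lab = a → LocalOK S.R t →
      ∃ u : UTree α, u.lab = b ∧ LocalOK S.R u ∧ sizeOf u ≤ sizeOf t := by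
  induction h using Relation.ReflTransGen.head_induction_on with
  | refl => exact fun t hl ho => ⟨t, hl, ho, le_refl _⟩
  | head e _ ih =>
    intro t hl ho
    cases t with
    | node c ts =>
      subst hl
      obtain ⟨s, hs, hsl, hso⟩ := child_of_uEdge ho e
      obtain ⟨u, hul, huo, hus⟩ := ih s hsl hso
      exact ⟨u, hul, huo, le_of_lt (lt_of_le_of_lt hus (sizeOf_lt_of_mem_children hs))⟩

lemma noCyc {S : MS α} [DecidableEq α] :
    ∀ n, ∀ t : UTree α, sizeOf t ≤ n → LocalOK S.R t →
      ¬ Relation.TransGen (uEdge S) t.lab t.lab := by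
  intro n
  induction n with
  | zero => intro t ht _ _; have := utree_sizeOf_pos t; omega
  | succ n ih =>
    intro t ht ho hcyc
    obtain ⟨c, hrt, e⟩ := Relation.TransGen.tail'_iff.mp hcyc
    obtain ⟨u, hul, huo, hus⟩ := descend hrt t rfl ho
    cases u with
    | node uc uts =>
      simp only [UTree.lab] at hul
      subst hul
      obtain ⟨v, hv, hvl, hvo⟩ := child_of_uEdge huo e
      have hsv := sizeOf_lt_of_mem_children (a := uc) (ts := uts) hv
      exact ih v (by omega) hvo (by rw [hvl]; exact hcyc)

/-- every `E`-path starting at `a` has at most `n` vertices. -/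
def NLC (E : α → α → Prop) (n : ℕ) (a : α) : Prop :=
  ∀ l : List α, l.Chain' E → l.head? = some a → l.length ≤ n

lemma unfold_lab [Fintype α] (E : α → α → Prop) (n : ℕ) (a : α) :
    (unfoldG E n a).lab = a := by
  cases n <;> simp [unfoldG, UTree.lab]

lemma unfold_ok {S : MS α} [Fintype α] [DecidableEq α] :
    ∀ n (a : α), NLC (uEdge S) n a → LocalOK S.R (unfoldG (uEdge S) n a) := by
  intro n
  induction n with
  | zero =>
    intro a h
    exact absurd (h [a] (List.isChain_singleton a) (by simp)) (by simp)
  | succ n ih =>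
    intro a h
    rw [unfoldG]
    refine LocalOK.node ?_ ?_
    · intro b
      have hlabels :
          (((Finset.univ.filter fun b => uEdge S a b).toList.map
              (unfoldG (uEdge S) n)).map UTree.lab)
            = (Finset.univ.filter fun b => uEdge S a b).toList := by
        rw [List.map_map]
        have : (UTree.lab ∘ unfoldG (uEdge S) n) = id := by
          funext x; simp [Function.comp, unfold_lab]
        rw [this, List.map_id]
      rw [hlabels]
      by_cases he : uEdge S a b
      · have hmem : b ∈ (Finset.univ.filter fun b => uEdge S a b).toList := by
          simp [Finset.mem_toList, he]
        rw [List.count_eq_one_of_mem (Finset.nodup_toList _) hmem]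
        rcases he with e | e <;> rw [e] <;> simp [Mult.sem]
      · have hnmem : b ∉ (Finset.univ.filter fun b => uEdge S a b).toList := by
          simp [Finset.mem_toList, he]
        rw [List.count_eq_zero_of_not_mem hnmem]
        cases hR : S.R a b <;> simp [uEdge, hR] at he ⊢ <;> simp [Mult.sem]
    · intro s hs
      obtain ⟨b, hb, rfl⟩ := List.mem_map.mp hs
      have hbe : uEdge S a b := by
        have := Finset.mem_toList.mp hb
        simpa using this
      apply ih
      intro l hcl hhl
      have hlen := h (a :: l)
        (List.isChain_cons.mpr ⟨fun y hy => by rw [hhl] at hy; cases hy; exact hbe, hcl⟩)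
        (by simp)
      simpa using hlen

lemma chain'_transGen {E : α → α → Prop} {l : List α} (h : l.Chain' E) :
    ∀ (i j : ℕ) (hj : j < l.length) (hij : i < j),
      Relation.TransGen E (l.get ⟨i, by omega⟩) (l.get ⟨j, hj⟩) := by
  intro i j
  induction j with
  | zero => intro _ hij; omega
  | succ j ihj =>
    intro hj hij
    have hstep : E (l.get ⟨j, by omega⟩) (l.get ⟨j + 1, by omega⟩) :=
      List.isChain_iff_getElem.mp h j (by omega)
    rcases Nat.lt_or_ge i j with h' | h'
    · exact (ihj (by omega) h').tail hstep
    · have : i = j := by omega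
      subst this
      exact Relation.TransGen.single hstep

lemma head_eq_get {l : List α} {a : α} (hh : l.head? = some a) (h0 : 0 < l.length) :
    l.get ⟨0, h0⟩ = a := by
  cases l with
  | nil => simp at hh
  | cons x xs => simpa using hh

lemma root_NLC {S : MS α} [Fintype α] [DecidableEq α]
    (hnc : ¬ ∃ a : α, Relation.ReflTransGen (uEdge S) S.root a ∧
        Relation.TransGen (uEdge S) a a) :
    NLC (uEdge S) (Fintype.card α) S.root := by
  intro l hcl hhl
  by_contra hlen
  push_neg at hlen
  obtain ⟨i, j, hne, hij⟩ :=
    Fintype.exists_ne_map_eq_of_card_lt (fun i : Fin l.length => l.get i) (by simpa)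
  apply hnc
  have h0 : 0 < l.length := by omega
  have key : ∀ (i j : Fin l.length), i < j →
      Relation.ReflTransGen (uEdge S) S.root (l.get i) ∧
        Relation.TransGen (uEdge S) (l.get i) (l.get i) → True := fun _ _ _ _ => trivial
  rcases lt_or_gt_of_ne hne with hlt | hlt
  · refine ⟨l.get i, ?_, ?_⟩
    · rcases Nat.eq_zero_or_pos i.val with h' | h'
      · have : l.get i = S.root := by
          have := head_eq_get hhl h0
          rw [show i = (⟨0, h0⟩ : Fin l.length) from Fin.ext h'] ; exact this
        rw [this]
      · have := chain'_transGen hcl 0 i.val i.isLt h'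
        rw [head_eq_get hhl h0] at this
        exact this.to_reflTransGen
    · have := chain'_transGen hcl i.val j.val j.isLt hlt
      rw [← hij] at this
      exact this
  · refine ⟨l.get j, ?_, ?_⟩
    · rcases Nat.eq_zero_or_pos j.val with h' | h'
      · have : l.get j = S.root := by
          have := head_eq_get hhl h0
          rw [show j = (⟨0, h0⟩ : Fin l.length) from Fin.ext h'] ; exact this
        rw [this]
      · have := chain'_transGen hcl 0 j.val j.isLt h'
        rw [head_eq_get hhl h0] at this
        exact this.to_reflTransGen
    · have := chain'_transGen hcl j.val i.val i.isLt hlt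
      rw [hij] at this
      exact this

end AuxProof

/-- a disjunction-free multiplicity schema is satisfiable iff no cycle is
reachable from the root label in its universal dependency graph. -/
theorem ms_satisfiable_iff_no_cycle_reachable
    {α : Type} [Fintype α] [DecidableEq α] (S : MS α) :
    (∃ t : UTree α, SatS S t) ↔
      ¬ ∃ a : α, Relation.ReflTransGen (uEdge S) S.root a ∧
        Relation.TransGen (uEdge S) a a := by
  constructor
  · rintro ⟨t, hlab, hok⟩ ⟨a, hreach, hcyc⟩
    obtain ⟨u, hul, huo, _⟩ := descend hreach t hlab hok
    exact noCyc (sizeOf u) u le_rfl huo (by rw [hul]; exact hcyc)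
  · intro hnc
    exact ⟨unfoldG (uEdge S) (Fintype.card α) S.root, unfold_lab _ _ _,
      unfold_ok _ _ (root_NLC hnc)⟩
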